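/- For any Boolean function f : {0,1}^n → {0,1}, the spectral norm of the adjacency matrix of its sensitivity graph is at most sqrt(s_0(f) · s_1(f)). -/

import Mathlib

open Finset

/-- Hamming weight of a Boolean string. -/
def wt {n : ℕ} (x : Fin n → Bool) : ℕ := (univ.filter (fun i => x i = true)).card

/-- The threshold function with threshold `k` on `n` bits. -/
def Tk (n k : ℕ) (x : Fin n → Bool) : Bool := decide (k ≤ wt x)

/-- Flip the `i`-th bit of `x`. -/
def flipBit {n : ℕ} (x : Fin n → Bool) (i : Fin n) : Fin n → Bool := Function.update x i (!x i)

/-- Sensitivity of `f` at input `x`. -/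
def sens {n : ℕ} (f : (Fin n → Bool) → Bool) (x : Fin n → Bool) : ℕ :=
  (univ.filter (fun i => f (flipBit x i) ≠ f x)).card

/-- The `b`-sensitivity of `f`: maximum sensitivity over inputs with value `b`. -/
def sensB {n : ℕ} (f : (Fin n → Bool) → Bool) (b : Bool) : ℕ :=
  (univ.filter (fun x => f x = b)).sup (sens f)

/-- Adjacency matrix of the sensitivity graph of `f`. -/
def adjMat {n : ℕ} (f : (Fin n → Bool) → Bool) : Matrix (Fin n → Bool) (Fin n → Bool) ℝ :=
  fun x y => if hammingDist x y = 1 ∧ f x ≠ f y then 1 else 0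

/-- Euclidean norm of a real vector indexed by a finite type. -/
noncomputable def enorm {ι : Type*} [Fintype ι] (v : ι → ℝ) : ℝ :=
  Real.sqrt (∑ i, v i ^ 2)

/-- Spectral norm of a real matrix, as the maximal stretch of a nonzero vector. -/
noncomputable def specNorm {ι : Type*} [Fintype ι] [DecidableEq ι] (A : Matrix ι ι ℝ) : ℝ :=
  sSup {r : ℝ | ∃ v : ι → ℝ, v ≠ 0 ∧ r = _root_.enorm (A.mulVec v) / _root_.enorm v}

lemma flip_diff {n : ℕ} (x : Fin n → Bool) (i j : Fin n) :
    (x j ≠ flipBit x i j) ↔ j = i := by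
  rcases eq_or_ne j i with h | h
  · subst h; simp [flipBit]
  · simp [flipBit, Function.update_of_ne h, h]

lemma hamming_flip {n : ℕ} (x : Fin n → Bool) (i : Fin n) :
    hammingDist x (flipBit x i) = 1 := by
  have h : (univ.filter (fun j => x j ≠ flipBit x i j)) = {i} := by
    ext j; simp [flip_diff]
  show (univ.filter (fun j => x j ≠ flipBit x i j)).card = 1
  rw [h]; simp

lemma flip_inj {n : ℕ} (x : Fin n → Bool) {i j : Fin n}
    (h : flipBit x i = flipBit x j) : i = j := by
  by_contra hne
  have h1 : flipBit x i i = !x i := by simp [flipBit]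
  have h2 : flipBit x j i = x i := by simp [flipBit, Function.update_of_ne hne]
  rw [h] at h1; rw [h1] at h2
  cases x i <;> simp at h2

lemma flip_surj {n : ℕ} (x y : Fin n → Bool) (h : hammingDist x y = 1) :
    ∃ i, flipBit x i = y := by
  have h' : (univ.filter (fun j => x j ≠ y j)).card = 1 := h
  obtain ⟨i, hi⟩ := Finset.card_eq_one.mp h'
  refine ⟨i, funext fun j => ?_⟩
  rcases eq_or_ne j i with rfl | hne
  · have : x j ≠ y j := by
      have := Finset.mem_singleton_self j
      rw [← hi, Finset.mem_filter] at this; exact this.2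
    simp only [flipBit, Function.update_self]
    cases hx : x j <;> cases hy : y j <;> simp_all
  · have : x j = y j := by
      by_contra hc
      have : j ∈ ({i} : Finset (Fin n)) := by rw [← hi]; simp [hc]
      simp at this; exact hne this
    simp [flipBit, Function.update_of_ne hne, this]

variable {n : ℕ} (f : (Fin n → Bool) → Bool)

lemma adj01 (x y : Fin n → Bool) : adjMat f x y = 0 ∨ adjMat f x y = 1 := by
  unfold adjMat; split <;> simp

lemma adj_sq (x y : Fin n → Bool) : adjMat f x y * adjMat f x y = adjMat f x y := by
  rcases adj01 f x y with h | h <;> rw [h] <;> ring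

lemma adj_nonneg (x y : Fin n → Bool) : 0 ≤ adjMat f x y := by
  rcases adj01 f x y with h | h <;> rw [h] <;> norm_num

lemma adj_symm (x y : Fin n → Bool) : adjMat f x y = adjMat f y x := by
  simp only [adjMat]
  exact if_congr (by rw [hammingDist_comm]; tauto) rfl rfl

lemma row_sum (x : Fin n → Bool) : ∑ y, adjMat f x y = (sens f x : ℝ) := by
  unfold adjMat
  rw [Finset.sum_boole]
  norm_cast
  symm
  exact Finset.card_bij (fun i _ => flipBit x i)
    (fun i hi => by
      simp only [Finset.mem_filter, Finset.mem_univ, true_and] at hi ⊢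
      exact ⟨hamming_flip x i, fun h => hi h.symm⟩)
    (fun i _ j _ h => flip_inj x h)
    (fun y hy => by
      simp only [Finset.mem_filter, Finset.mem_univ, true_and] at hy
      obtain ⟨i, hi⟩ := flip_surj x y hy.1
      refine ⟨i, Finset.mem_filter.mpr ⟨Finset.mem_univ i, ?_⟩, hi⟩
      rw [hi]; exact fun h => hy.2 h.symm)

lemma col_sum (y : Fin n → Bool) : ∑ x, adjMat f x y = (sens f y : ℝ) := by
  rw [← row_sum f y]; exact Finset.sum_congr rfl fun x _ => adj_symm f x y

lemma sens_le_sensB (x : Fin n → Bool) : (sens f x : ℝ) ≤ (sensB f (f x) : ℝ) := by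
  unfold sensB
  exact_mod_cast Finset.le_sup (f := sens f) (s := univ.filter (fun y => f y = f x))
    (Finset.mem_filter.mpr ⟨Finset.mem_univ x, rfl⟩)

lemma adj_val (x y : Fin n → Bool) (h : adjMat f x y ≠ 0) : f x = !f y := by
  unfold adjMat at h
  split at h
  · next hc => cases hfy : f y <;> cases hfx : f x <;> simp_all
  · simp at h

theorem specNorm_le_sqrt_sens (n : ℕ) (f : (Fin n → Bool) → Bool) :
    specNorm (adjMat f) ≤ Real.sqrt ((sensB f false : ℝ) * (sensB f true : ℝ)) := by
  have hC : 0 ≤ (sensB f false : ℝ) * (sensB f true : ℝ) := by positivity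
  apply Real.sSup_le _ (Real.sqrt_nonneg _)
  rintro r ⟨v, hv, rfl⟩
  obtain ⟨i0, hi0⟩ := Function.ne_iff.mp hv
  simp only [Pi.zero_apply] at hi0
  have hsum : 0 < ∑ i, v i ^ 2 :=
    Finset.sum_pos' (fun i _ => sq_nonneg _) ⟨i0, Finset.mem_univ _, by positivity⟩
  have hEv : 0 < _root_.enorm v := Real.sqrt_pos.mpr hsum
  rw [div_le_iff₀ hEv]
  set C := (sensB f false : ℝ) * (sensB f true : ℝ) with hCdef
  have key : ∑ x, ((adjMat f).mulVec v x) ^ 2 ≤ C * ∑ y, v y ^ 2 := by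
    have step1 : ∀ x, ((adjMat f).mulVec v x) ^ 2
        ≤ (sensB f (f x) : ℝ) * ∑ y, adjMat f x y * v y ^ 2 := by
      intro x
      have cs := Finset.sum_mul_sq_le_sq_mul_sq univ
        (fun y => adjMat f x y) (fun y => adjMat f x y * v y)
      have e1 : ∑ y, adjMat f x y * (adjMat f x y * v y) = (adjMat f).mulVec v x := by
        simp only [Matrix.mulVec, dotProduct]
        exact Finset.sum_congr rfl fun y _ => by rw [← mul_assoc, adj_sq]
      have e2 : ∑ y, (adjMat f x y) ^ 2 = (sens f x : ℝ) := by
        rw [← row_sum f x]; exact Finset.sum_congr rfl fun y _ => by rw [sq, adj_sq]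
      have e3 : ∑ y, (adjMat f x y * v y) ^ 2 = ∑ y, adjMat f x y * v y ^ 2 :=
        Finset.sum_congr rfl fun y _ => by
          rw [mul_pow, sq (adjMat f x y), adj_sq]
      rw [e1, e2, e3] at cs
      refine cs.trans (mul_le_mul_of_nonneg_right (sens_le_sensB f x) ?_)
      exact Finset.sum_nonneg fun y _ => mul_nonneg (adj_nonneg f x y) (sq_nonneg _)
    calc ∑ x, ((adjMat f).mulVec v x) ^ 2
        ≤ ∑ x, (sensB f (f x) : ℝ) * ∑ y, adjMat f x y * v y ^ 2 :=
          Finset.sum_le_sum fun x _ => step1 x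
      _ = ∑ y, (∑ x, (sensB f (f x) : ℝ) * adjMat f x y) * v y ^ 2 := by
          simp_rw [Finset.mul_sum]
          rw [Finset.sum_comm]
          exact Finset.sum_congr rfl fun y _ => by
            rw [Finset.sum_mul]
            exact Finset.sum_congr rfl fun x _ => by ring
      _ ≤ ∑ y, C * v y ^ 2 := by
          refine Finset.sum_le_sum fun y _ => mul_le_mul_of_nonneg_right ?_ (sq_nonneg _)
          have inner : ∑ x, (sensB f (f x) : ℝ) * adjMat f x y
              ≤ (sensB f (!f y) : ℝ) * ∑ x, adjMat f x y := by
            rw [Finset.mul_sum]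
            refine Finset.sum_le_sum fun x _ => ?_
            rcases eq_or_ne (adjMat f x y) 0 with h | h
            · rw [h]; simp
            · rw [adj_val f x y h]
          refine inner.trans ?_
          rw [col_sum]
          have h2 : (sensB f (!f y) : ℝ) * (sens f y : ℝ)
              ≤ (sensB f (!f y) : ℝ) * (sensB f (f y) : ℝ) :=
            mul_le_mul_of_nonneg_left (sens_le_sensB f y) (by positivity)
          refine h2.trans ?_
          cases hfy : f y
          · exact le_of_eq (mul_comm _ _)
          · exact le_of_eq rfl
      _ = C * ∑ y, v y ^ 2 := by rw [← Finset.mul_sum]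
  have hle : _root_.enorm ((adjMat f).mulVec v) ≤ Real.sqrt (C * ∑ y, v y ^ 2) := by
    unfold _root_.enorm; exact Real.sqrt_le_sqrt key
  refine hle.trans ?_
  rw [Real.sqrt_mul hC]
  exact le_of_eq rfl
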